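/- Chart production: Let G be an abelian group generated by a submonoid P, and let U = P ∩ (−P) be the (sub)group of units of P. Let A be an abelian group and h : A → G a group homomorphism such that for every p ∈ P there exist a ∈ A and u ∈ U with p = h(a) + u. Set Q := h⁻¹(P), a submonoid of A. Then: (i) Q ∩ (−Q) = h⁻¹(U); (ii) the induced map on sharpenings is an isomorphism, i.e., for every p ∈ P there exist a ∈ Q and u ∈ U with p = h(a) + u, and whenever a₁, a₂ ∈ Q satisfy h(a₁) − h(a₂) ∈ U, one has a₁ − a₂ ∈ Q ∩ (−Q); (iii) if moreover A is finitely generated and there is a finite subset S ⊆ P such that every element of P is a sum of elements of S ∪ U, then Q is a finitely generated monoid. -/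

import Mathlib

/-- **Chart production.** Let `G` be an abelian group generated by a submonoid `P` (so
`G = P^gp`), with unit group `U = P ∩ (−P)`.  Let `h : A → G` be a homomorphism of
abelian groups such that every `p ∈ P` can be written as `p = h a + u` with `u ∈ U`
(the image of `A` in `G ⧸ U` contains the sharpening of `P`).  Let `Q := h⁻¹(P)`.
Then (i) the units of `Q` are `h⁻¹(U)`; (ii) the induced map of sharpenings `Q̄ → P̄` is an
isomorphism (surjective and injective, as spelled out); and (iii) if `A` is finitely
generated and `P̄` is finitely generated (there is a finite `S ⊆ P` with every element of
`P` a sum of elements of `S ∪ U`), then `Q` is a finitely generated (hence fine)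
monoid. -/
theorem chart_production
    (G : Type*) [AddCommGroup G] (P : AddSubmonoid G)
    (hgen : AddSubgroup.closure (P : Set G) = ⊤)
    (A : Type*) [AddCommGroup A] (h : A →+ G)
    (hsurj : ∀ p ∈ P, ∃ a : A, ∃ u : G, (u ∈ P ∧ -u ∈ P) ∧ p = h a + u) :
    (∀ a : A, (a ∈ P.comap h ∧ -a ∈ P.comap h) ↔ (h a ∈ P ∧ -(h a) ∈ P)) ∧
    (∀ p ∈ P, ∃ a ∈ P.comap h, ∃ u : G, (u ∈ P ∧ -u ∈ P) ∧ p = h a + u) ∧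
    (∀ a₁ a₂ : A, a₁ ∈ P.comap h → a₂ ∈ P.comap h →
      (h a₁ - h a₂ ∈ P ∧ -(h a₁ - h a₂) ∈ P) →
      (a₁ - a₂ ∈ P.comap h ∧ -(a₁ - a₂) ∈ P.comap h)) ∧
    (AddGroup.FG A →
      (∃ S : Finset G, ↑S ⊆ (P : Set G) ∧
        ∀ p ∈ P, p ∈ AddSubmonoid.closure (↑S ∪ {u : G | u ∈ P ∧ -u ∈ P})) →
      (P.comap h).FG) := by
  refine ⟨?_, ?_, ?_, ?_⟩
  · intro a
    simp [AddSubmonoid.mem_comap, map_neg]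
  · intro p hp
    obtain ⟨a, u, ⟨hu, hu'⟩, hpe⟩ := hsurj p hp
    refine ⟨a, ?_, u, ⟨hu, hu'⟩, hpe⟩
    have : h a = p + (-u) := by rw [hpe]; abel
    simpa [AddSubmonoid.mem_comap, this] using P.add_mem hp hu'
  · rintro a₁ a₂ h1 h2 ⟨hd, hd'⟩
    constructor
    · simpa [AddSubmonoid.mem_comap, map_sub] using hd
    · simpa [AddSubmonoid.mem_comap, map_neg, map_sub] using hd'
  · rintro hA ⟨S, hSP, hS⟩
    -- The subgroup `K = h⁻¹(U)` of `A`.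
    let K : AddSubgroup A :=
      { carrier := {a | h a ∈ P ∧ -(h a) ∈ P}
        zero_mem' := ⟨by simpa using P.zero_mem, by simpa using P.zero_mem⟩
        add_mem' := fun {a b} ha hb => ⟨by simpa [map_add] using P.add_mem ha.1 hb.1,
          by simpa [map_add, neg_add] using P.add_mem hb.2 ha.2⟩
        neg_mem' := fun {a} ha => ⟨by simpa using ha.2, by simpa using ha.1⟩ }
    -- `K` is a finitely generated subgroup of the f.g. abelian group `A`.
    have : Module.Finite ℤ A := Module.Finite.iff_addGroup_fg.mpr hA
    have hKfg : K.FG := by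
      have hmod : (AddSubgroup.toIntSubmodule K).FG := IsNoetherian.noetherian _
      have := (Submodule.fg_iff_addSubgroup_fg _).mp hmod
      rwa [AddSubgroup.toIntSubmodule_toAddSubgroup] at this
    obtain ⟨F, hF⟩ := (AddSubgroup.fg_iff_addSubmonoid_fg K).mp hKfg
    -- choose lifts of the elements of `S`
    have hchoice : ∀ s : {x // x ∈ S}, ∃ a : A, h a ∈ P ∧
        ∃ u : G, (u ∈ P ∧ -u ∈ P) ∧ (s : G) = h a + u := by
      intro s
      obtain ⟨a, u, ⟨hu, hu'⟩, he⟩ := hsurj s (hSP s.2)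
      refine ⟨a, ?_, u, ⟨hu, hu'⟩, he⟩
      have : h a = (s : G) + (-u) := by rw [he]; abel
      rw [this]; exact P.add_mem (hSP s.2) hu'
    choose f hfP uf huf hef using hchoice
    classical
    refine ⟨S.attach.image f ∪ F, le_antisymm ?_ ?_⟩
    · rw [AddSubmonoid.closure_le]
      rintro x hx
      rcases Finset.mem_union.mp (by exact_mod_cast hx) with hx | hx
      · obtain ⟨s, _, rfl⟩ := Finset.mem_image.mp hx
        exact hfP s
      · have : x ∈ K.toAddSubmonoid := hF ▸ AddSubmonoid.subset_closure hx
        exact this.1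
    · intro q hq
      have hq' : h q ∈ AddSubmonoid.closure (↑S ∪ {u : G | u ∈ P ∧ -u ∈ P}) := hS (h q) hq
      -- key: every element of the closure is `h b + u` with `b` in the claimed monoid
      have key : ∀ g ∈ AddSubmonoid.closure (↑S ∪ {u : G | u ∈ P ∧ -u ∈ P}),
          ∃ b ∈ AddSubmonoid.closure ((↑(S.attach.image f ∪ F) : Set A)),
            ∃ u : G, (u ∈ P ∧ -u ∈ P) ∧ g = h b + u := by
        intro g hg
        induction hg using AddSubmonoid.closure_induction with
        | mem x hx =>
          rcases hx with hx | hx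
          · refine ⟨f ⟨x, hx⟩, AddSubmonoid.subset_closure ?_, uf ⟨x, hx⟩,
              huf ⟨x, hx⟩, hef ⟨x, hx⟩⟩
            simp only [Finset.coe_union, Set.mem_union]
            exact Or.inl (Finset.mem_coe.mpr (Finset.mem_image.mpr
              ⟨⟨x, hx⟩, Finset.mem_attach _ _, rfl⟩))
          · exact ⟨0, AddSubmonoid.zero_mem _, x, hx, by simp⟩
        | zero => exact ⟨0, AddSubmonoid.zero_mem _, 0, ⟨P.zero_mem, by simpa using P.zero_mem⟩,
            by simp⟩
        | add x y hx hy ihx ihy =>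
          obtain ⟨b₁, hb₁, u₁, ⟨hu₁, hu₁'⟩, he₁⟩ := ihx
          obtain ⟨b₂, hb₂, u₂, ⟨hu₂, hu₂'⟩, he₂⟩ := ihy
          refine ⟨b₁ + b₂, AddSubmonoid.add_mem _ hb₁ hb₂, u₁ + u₂,
            ⟨P.add_mem hu₁ hu₂, by simpa [neg_add] using P.add_mem hu₂' hu₁'⟩, ?_⟩
          rw [he₁, he₂, map_add]; abel
      obtain ⟨b, hb, u, ⟨hu, hu'⟩, he⟩ := key (h q) hq'
      -- then `q - b ∈ K`, so `q = b + (q - b)` lies in the closure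
      have hqb : q - b ∈ K := by
        constructor
        · have : h (q - b) = u := by rw [map_sub, he]; abel
          rw [this]; exact hu
        · have : -(h (q - b)) = -u := by rw [map_sub, he]; abel
          rw [this]; exact hu'
      have hqb' : q - b ∈ AddSubmonoid.closure ((↑(S.attach.image f ∪ F) : Set A)) := by
        have : q - b ∈ AddSubmonoid.closure (F : Set A) := hF ▸ hqb
        refine AddSubmonoid.closure_mono ?_ this
        intro x hx
        simp only [Finset.coe_union, Set.mem_union]
        exact Or.inr hx
      have : q = b + (q - b) := by abel
      rw [this]
      exact AddSubmonoid.add_mem _ hb hqb'
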